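/- Let X be a Polish space, Λ a Borel subset of X, and T₁, T₂ two continuous self-maps of X. Assume that for every compact set K ⊆ X with K ∩ Λ = ∅, there exists an infinite set I ⊆ ℕ such that limsup_{n∈I} (T₁^{-n}(K) ∩ T₂^{-n}(K)) = ∅, where limsup of a sequence of sets is the set of points belonging to infinitely many of them. Then for any Borel probability measures m₁, m₂ on X such that m₁ is T₁-invariant, m₂ is T₂-invariant, and m₁(Λ) = 0 = m₂(Λ), the measures m₁ and m₂ are mutually singular. -/

import Mathlib

open MeasureTheory Filter
open scoped ENNReal

private lemma geom_tsum_aux : ∑' n : ℕ, (2 : ℝ≥0∞)⁻¹ ^ n = 2 := by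
  rw [ENNReal.tsum_geometric, ENNReal.one_sub_inv_two, inv_inv]

/-- Tightness: a finite Borel measure on a Polish space is inner regular at `univ` by compacts. -/
private lemma tight_compl {X : Type*} [TopologicalSpace X] [PolishSpace X] [MeasurableSpace X]
    [BorelSpace X] (μ : Measure X) [IsFiniteMeasure μ] {ε : ℝ≥0∞} (hε : ε ≠ 0) :
    ∃ K : Set X, IsCompact K ∧ μ Kᶜ ≤ ε := by
  letI := TopologicalSpace.upgradeIsCompletelyMetrizable X
  rcases isEmpty_or_nonempty X with h | h
  · exact ⟨∅, isCompact_empty, by simp [Set.eq_empty_of_isEmpty]⟩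
  obtain ⟨u, hu⟩ := TopologicalSpace.exists_dense_seq X
  have main : ∀ n : ℕ, ∃ N : ℕ,
      μ (⋃ i ∈ Set.Iic N, Metric.closedBall (u i) ((n : ℝ) + 1)⁻¹)ᶜ ≤ ε * 2⁻¹ ^ (n + 1) := by
    intro n
    have hrpos : (0 : ℝ) < ((n : ℝ) + 1)⁻¹ := by positivity
    set F : ℕ → Set X := fun N => ⋃ i ∈ Set.Iic N, Metric.closedBall (u i) ((n : ℝ) + 1)⁻¹
      with hF
    have hFmeas : ∀ N, MeasurableSet (F N) := fun N =>
      ((Set.finite_Iic N).isClosed_biUnion fun i _ => Metric.isClosed_closedBall).measurableSet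
    have hmono : Monotone F := fun a b hab =>
      Set.biUnion_subset_biUnion_left (Set.Iic_subset_Iic.2 hab)
    have hunion : (⋃ N, F N) = Set.univ := by
      ext x
      simp only [Set.mem_iUnion, Set.mem_univ, iff_true, hF, Set.mem_Iic]
      obtain ⟨i, hi⟩ := hu.exists_dist_lt x hrpos
      exact ⟨i, i, le_rfl, Metric.mem_closedBall.2 hi.le⟩
    have htend := tendsto_measure_iUnion_atTop (μ := μ) hmono
    rw [hunion] at htend
    have hε' : ε * 2⁻¹ ^ (n + 1) ≠ 0 := by
      refine mul_ne_zero hε (pow_ne_zero _ ?_)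
      simp
    have hnb : {x : ℝ≥0∞ | μ Set.univ < x + ε * 2⁻¹ ^ (n + 1)} ∈ nhds (μ Set.univ) := by
      have hopen : IsOpen {x : ℝ≥0∞ | μ Set.univ < x + ε * 2⁻¹ ^ (n + 1)} :=
        isOpen_lt continuous_const (continuous_id.add continuous_const)
      exact hopen.mem_nhds (ENNReal.lt_add_right (measure_ne_top μ _) hε')
    obtain ⟨N, hN⟩ := (htend.eventually hnb).exists
    refine ⟨N, ?_⟩
    rw [measure_compl (hFmeas N) (measure_ne_top μ _)]
    exact tsub_le_iff_right.2 (by simpa [add_comm] using hN.le)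
  choose N hN using main
  refine ⟨⋂ n, ⋃ i ∈ Set.Iic (N n), Metric.closedBall (u i) ((n : ℝ) + 1)⁻¹, ?_, ?_⟩
  · refine TotallyBounded.isCompact_of_isClosed ?_ ?_
    · rw [Metric.totallyBounded_iff]
      intro δ hδ
      obtain ⟨n, hn⟩ := exists_nat_one_div_lt hδ
      refine ⟨u '' Set.Iic (N n), (Set.finite_Iic _).image _, ?_⟩
      intro x hx
      have hx' := Set.mem_iInter.1 hx n
      simp only [Set.mem_iUnion, Set.mem_Iic] at hx'
      obtain ⟨i, hi, hxi⟩ := hx'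
      refine Set.mem_biUnion (Set.mem_image_of_mem u (Set.mem_Iic.2 hi)) ?_
      have hlt : ((n : ℝ) + 1)⁻¹ < δ := by
        rw [one_div] at hn; exact hn
      exact Metric.closedBall_subset_ball hlt hxi
    · exact isClosed_iInter fun n =>
        (Set.finite_Iic (N n)).isClosed_biUnion fun i _ => Metric.isClosed_closedBall
  · rw [Set.compl_iInter]
    refine (measure_iUnion_le _).trans ?_
    calc ∑' n, μ (⋃ i ∈ Set.Iic (N n), Metric.closedBall (u i) ((n : ℝ) + 1)⁻¹)ᶜ
        ≤ ∑' n, ε * 2⁻¹ ^ (n + 1) := ENNReal.tsum_le_tsum hN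
      _ = ε * (2⁻¹ * (1 - 2⁻¹)⁻¹) := by
          rw [ENNReal.tsum_mul_left, ENNReal.tsum_geometric_add_one]
      _ = ε := by
          rw [ENNReal.one_sub_inv_two, inv_inv,
            ENNReal.inv_mul_cancel two_ne_zero ENNReal.ofNat_ne_top, mul_one]

private lemma iter_invariant {X : Type*} [MeasurableSpace X] {T : X → X} {m : Measure X}
    (hT : Measurable T) (h : ∀ A : Set X, MeasurableSet A → m (T ⁻¹' A) = m A)
    (n : ℕ) {A : Set X} (hA : MeasurableSet A) : m (T^[n] ⁻¹' A) = m A := by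
  induction n with
  | zero => simp
  | succ n ih =>
    rw [Function.iterate_succ, Set.preimage_comp, h _ ((hT.iterate n) hA), ih]

/-- General criterion for orthogonality: if for every compact `K` disjoint from
`Λ` there is an infinite set `I ⊆ ℕ` along which `limsup (T₁^{-n}(K) ∩ T₂^{-n}(K)) = ∅`, then any
`T₁`-invariant and `T₂`-invariant Borel probability measures not charging `Λ` are mutually
singular. -/
theorem mutuallySingular_of_limsup_empty
    {X : Type*} [TopologicalSpace X] [PolishSpace X] [MeasurableSpace X] [BorelSpace X]
    (Λ : Set X) (hΛ : MeasurableSet Λ)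
    (T₁ T₂ : X → X) (hT₁ : Continuous T₁) (hT₂ : Continuous T₂)
    (H : ∀ K : Set X, IsCompact K → K ∩ Λ = ∅ →
      ∃ I : Set ℕ, I.Infinite ∧
        ∀ x : X, ¬ {n : ℕ | n ∈ I ∧ T₁^[n] x ∈ K ∧ T₂^[n] x ∈ K}.Infinite)
    (m₁ m₂ : Measure X) [IsProbabilityMeasure m₁] [IsProbabilityMeasure m₂]
    (h₁ : ∀ A : Set X, MeasurableSet A → m₁ (T₁ ⁻¹' A) = m₁ A)
    (h₂ : ∀ A : Set X, MeasurableSet A → m₂ (T₂ ⁻¹' A) = m₂ A)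
    (hm₁ : m₁ Λ = 0) (hm₂ : m₂ Λ = 0) :
    m₁.MutuallySingular m₂ := by
  -- Step 1: For every `k`, construct a measurable set `S` with
  -- `m₁ S ≤ 3 * 2⁻¹ ^ k` and `m₂ Sᶜ ≤ 2 * 2⁻¹ ^ k`.
  have key : ∀ k : ℕ, ∃ S : Set X, MeasurableSet S ∧
      m₁ S ≤ 3 * (2 : ℝ≥0∞)⁻¹ ^ k ∧ m₂ Sᶜ ≤ 2 * (2 : ℝ≥0∞)⁻¹ ^ k := by
    intro k
    set ε : ℝ≥0∞ := (2 : ℝ≥0∞)⁻¹ ^ k with hεdef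
    have hε0 : ε ≠ 0 := pow_ne_zero _ (by simp)
    set μ : Measure X := m₁ + m₂ with hμdef
    have hμΛ : μ Λ = 0 := by
      simp [hμdef, Measure.add_apply, hm₁, hm₂]
    -- a compact set K₀ with small complement
    obtain ⟨K₀, hK₀c, hK₀⟩ := tight_compl μ hε0
    -- a closed set F ⊆ Λᶜ with μ (Λᶜ \ F) < ε
    obtain ⟨F, hFsub, hFclosed, hFlt⟩ :=
      (hΛ.compl).exists_isClosed_diff_lt (measure_ne_top μ _) hε0
    set K : Set X := K₀ ∩ F with hKdef
    have hKc : IsCompact K := hK₀c.inter_right hFclosed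
    have hKΛ : K ∩ Λ = ∅ := by
      apply Set.eq_empty_of_forall_notMem
      rintro x ⟨⟨_, hxF⟩, hxΛ⟩
      exact (hFsub hxF) hxΛ
    have hFcompl : μ Fᶜ ≤ ε := by
      have hsub : Fᶜ ⊆ Λ ∪ (Λᶜ \ F) := by
        intro x hx
        by_cases hxΛ : x ∈ Λ
        · exact Or.inl hxΛ
        · exact Or.inr ⟨hxΛ, hx⟩
      calc μ Fᶜ ≤ μ (Λ ∪ (Λᶜ \ F)) := measure_mono hsub
        _ ≤ μ Λ + μ (Λᶜ \ F) := measure_union_le _ _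
        _ ≤ 0 + ε := by
            refine add_le_add (le_of_eq hμΛ) hFlt.le
        _ = ε := by rw [zero_add]
    have hKcompl : μ Kᶜ ≤ 2 * ε := by
      have : Kᶜ = K₀ᶜ ∪ Fᶜ := by
        rw [hKdef, Set.compl_inter]
      rw [this]
      calc μ (K₀ᶜ ∪ Fᶜ) ≤ μ K₀ᶜ + μ Fᶜ := measure_union_le _ _
        _ ≤ ε + ε := add_le_add hK₀ hFcompl
        _ = 2 * ε := (two_mul ε).symm
    have hm₁K : m₁ Kᶜ ≤ 2 * ε := le_trans (by simp [hμdef, Measure.add_apply]) hKcompl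
    have hm₂K : m₂ Kᶜ ≤ 2 * ε := le_trans (by simp [hμdef, Measure.add_apply]) hKcompl
    -- apply the hypothesis
    obtain ⟨I, hI, hfin⟩ := H K hKc hKΛ
    have hKmeas : MeasurableSet K := hKc.isClosed.measurableSet
    set A : ℕ → Set X := fun n => T₁^[n] ⁻¹' K ∩ T₂^[n] ⁻¹' K with hAdef
    have hAmeas : ∀ n, MeasurableSet (A n) := fun n =>
      (((hT₁.iterate n).measurable) hKmeas).inter (((hT₂.iterate n).measurable) hKmeas)
    set G : ℕ → Set X := fun N => ⋃ n ∈ {m : ℕ | m ∈ I ∧ N ≤ m}, A n with hGdef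
    have hGmeas : ∀ N, MeasurableSet (G N) :=
      fun N => MeasurableSet.biUnion (Set.to_countable _) fun n _ => hAmeas n
    have hGanti : Antitone G := by
      intro a b hab
      refine Set.biUnion_subset_biUnion_left ?_
      rintro n ⟨hnI, hn⟩
      exact ⟨hnI, hab.trans hn⟩
    have hGempty : ⋂ N, G N = ∅ := by
      apply Set.eq_empty_of_forall_notMem
      intro x hx
      apply hfin x
      apply Set.infinite_of_not_bddAbove
      rintro ⟨b, hb⟩
      have hxb := Set.mem_iInter.1 hx (b + 1)
      simp only [hGdef, Set.mem_iUnion, Set.mem_setOf_eq, exists_prop] at hxb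
      obtain ⟨n, ⟨hnI, hbn⟩, hxA⟩ := hxb
      have hnmem : n ∈ {n : ℕ | n ∈ I ∧ T₁^[n] x ∈ K ∧ T₂^[n] x ∈ K} :=
        ⟨hnI, hxA.1, hxA.2⟩
      exact absurd (hb hnmem) (by omega)
    have htend := tendsto_measure_iInter_atTop (μ := m₁)
      (fun N => (hGmeas N).nullMeasurableSet) hGanti ⟨0, measure_ne_top m₁ _⟩
    rw [hGempty] at htend
    have hev : ∀ᶠ N in atTop, (m₁ ∘ G) N < ε := by
      refine htend.eventually_lt_const ?_
      simpa using pos_iff_ne_zero.2 hε0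
    obtain ⟨N, hN⟩ := hev.exists
    obtain ⟨n, hnI, hNn⟩ := hI.exists_gt N
    refine ⟨T₂^[n] ⁻¹' K, ((hT₂.iterate n).measurable) hKmeas, ?_, ?_⟩
    · have hsub : T₂^[n] ⁻¹' K ⊆ A n ∪ T₁^[n] ⁻¹' Kᶜ := by
        intro x hx
        by_cases hx1 : T₁^[n] x ∈ K
        · exact Or.inl ⟨hx1, hx⟩
        · exact Or.inr hx1
      have hAn : m₁ (A n) ≤ ε := by
        refine le_trans (measure_mono ?_) hN.le
        exact Set.subset_biUnion_of_mem (u := A) (show n ∈ {m : ℕ | m ∈ I ∧ N ≤ m} from ⟨hnI, hNn.le⟩)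
      calc m₁ (T₂^[n] ⁻¹' K) ≤ m₁ (A n ∪ T₁^[n] ⁻¹' Kᶜ) := measure_mono hsub
        _ ≤ m₁ (A n) + m₁ (T₁^[n] ⁻¹' Kᶜ) := measure_union_le _ _
        _ ≤ ε + 2 * ε := by
            refine add_le_add hAn ?_
            rw [iter_invariant hT₁.measurable h₁ n hKmeas.compl]
            exact hm₁K
        _ = 3 * ε := by ring
    · rw [← Set.preimage_compl, iter_invariant hT₂.measurable h₂ n hKmeas.compl]
      exact hm₂K
  choose S hSmeas hS₁ hS₂ using key
  -- Step 2: take `E = limsup S k`.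
  refine ⟨⋂ N, ⋃ j, S (N + j), ?_, ?_, ?_⟩
  · exact MeasurableSet.iInter fun N => MeasurableSet.iUnion fun j => hSmeas _
  · -- m₁ of the limsup is 0
    have hbound : ∀ N : ℕ, m₁ (⋂ N, ⋃ j, S (N + j)) ≤ 6 * (2 : ℝ≥0∞)⁻¹ ^ N := by
      intro N
      calc m₁ (⋂ N, ⋃ j, S (N + j)) ≤ m₁ (⋃ j, S (N + j)) :=
            measure_mono (Set.iInter_subset _ N)
        _ ≤ ∑' j, m₁ (S (N + j)) := measure_iUnion_le _
        _ ≤ ∑' j, (3 * (2 : ℝ≥0∞)⁻¹ ^ N) * 2⁻¹ ^ j := by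
            refine ENNReal.tsum_le_tsum fun j => ?_
            calc m₁ (S (N + j)) ≤ 3 * (2 : ℝ≥0∞)⁻¹ ^ (N + j) := hS₁ _
              _ = (3 * (2 : ℝ≥0∞)⁻¹ ^ N) * 2⁻¹ ^ j := by rw [pow_add, mul_assoc]
        _ = (3 * (2 : ℝ≥0∞)⁻¹ ^ N) * 2 := by rw [ENNReal.tsum_mul_left, geom_tsum_aux]
        _ = 6 * (2 : ℝ≥0∞)⁻¹ ^ N := by ring
    have htend : Tendsto (fun N : ℕ => 6 * (2 : ℝ≥0∞)⁻¹ ^ N) atTop (nhds 0) := by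
      have := ENNReal.tendsto_pow_atTop_nhds_zero_of_lt_one
        (by simp [ENNReal.inv_lt_one] : (2 : ℝ≥0∞)⁻¹ < 1)
      simpa using ENNReal.Tendsto.const_mul this (Or.inr (by norm_num))
    exact le_antisymm (ge_of_tendsto' htend hbound) zero_le
  · -- m₂ of the complement is 0
    rw [Set.compl_iInter]
    refine measure_iUnion_null fun N => ?_
    rw [Set.compl_iUnion]
    have hbound : ∀ j : ℕ, m₂ (⋂ j, (S (N + j))ᶜ) ≤ 2 * (2 : ℝ≥0∞)⁻¹ ^ (N + j) := by
      intro j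
      exact le_trans (measure_mono (Set.iInter_subset _ j)) (hS₂ _)
    have htend : Tendsto (fun j : ℕ => 2 * (2 : ℝ≥0∞)⁻¹ ^ (N + j)) atTop (nhds 0) := by
      have h1 := ENNReal.tendsto_pow_atTop_nhds_zero_of_lt_one
        (by simp [ENNReal.inv_lt_one] : (2 : ℝ≥0∞)⁻¹ < 1)
      have h2 : Tendsto (fun j : ℕ => (2 : ℝ≥0∞)⁻¹ ^ (N + j)) atTop (nhds 0) := by
        simpa [Function.comp_def, Nat.add_comm] using (h1.comp (tendsto_add_atTop_nat N))
      simpa using ENNReal.Tendsto.const_mul h2 (Or.inr (by norm_num))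
    exact le_antisymm (ge_of_tendsto' htend hbound) zero_le
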